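/- For ε < 1-√2/2, the point ((1-ε)²/4, (2-ε)/4) does not lie in the convex hull of the points (0, 1/2), ((1-ε)(3-2ε)/(4(2-ε)), (3-2ε)/(4(2-ε))), ((3-2ε)/(4(2-ε)), (1-ε)(3-2ε)/(4(2-ε))), and (1/2, 0). -/

import Mathlib

theorem stmt_14 (ε : ℝ) (h0 : 0 < ε) (h1 : ε < 1 - Real.sqrt 2 / 2) :
    (((1 - ε)^2 / 4, (2 - ε) / 4) : ℝ × ℝ) ∉
      convexHull ℝ ({((0:ℝ), (1/2:ℝ)),
        ((1 - ε) * (3 - 2*ε) / (4 * (2 - ε)), (3 - 2*ε) / (4 * (2 - ε))),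
        ((3 - 2*ε) / (4 * (2 - ε)), (1 - ε) * (3 - 2*ε) / (4 * (2 - ε))),
        ((1/2:ℝ), (0:ℝ))} : Set (ℝ × ℝ)) := by
  intro hmem
  have hs2 : Real.sqrt 2 ^ 2 = 2 := Real.sq_sqrt (by norm_num)
  have hs2n : (0:ℝ) ≤ Real.sqrt 2 := Real.sqrt_nonneg 2
  have hε3 : ε < 0.3 := by nlinarith
  have hq : 1/2 < (1 - ε)^2 := by nlinarith
  have h2ε : (0:ℝ) < 2 - ε := by linarith
  set k : ℝ := (1 - ε) * (3 - 2*ε) with hk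
  have hlin : IsLinearMap ℝ (fun p : ℝ × ℝ => p.1 + k * p.2) := by
    constructor
    · intro p q; simp [Prod.fst_add, Prod.snd_add]; ring
    · intro c p; simp [Prod.smul_fst, Prod.smul_snd, smul_eq_mul]; ring
  have hconv : Convex ℝ {p : ℝ × ℝ | p.1 + k * p.2 ≤ k / 2} :=
    convex_halfSpace_le hlin (k / 2)
  have hsub : ({((0:ℝ), (1/2:ℝ)),
        ((1 - ε) * (3 - 2*ε) / (4 * (2 - ε)), (3 - 2*ε) / (4 * (2 - ε))),
        ((3 - 2*ε) / (4 * (2 - ε)), (1 - ε) * (3 - 2*ε) / (4 * (2 - ε))),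
        ((1/2:ℝ), (0:ℝ))} : Set (ℝ × ℝ)) ⊆ {p : ℝ × ℝ | p.1 + k * p.2 ≤ k / 2} := by
    rintro p (rfl | rfl | rfl | rfl) <;> simp only [Set.mem_setOf_eq, hk]
    · nlinarith
    · rw [← mul_div_assoc, ← add_div, div_le_div_iff₀ (by positivity) (by norm_num : (0:ℝ) < 2)]
      nlinarith
    · rw [← mul_div_assoc, ← add_div, div_le_div_iff₀ (by positivity) (by norm_num : (0:ℝ) < 2)]
      nlinarith [mul_nonneg (mul_nonneg (by nlinarith : (0:ℝ) ≤ 3 - 2*ε)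
        (by nlinarith : (0:ℝ) ≤ 1 - (1-ε)^2)) (by nlinarith : (0:ℝ) ≤ 2*(1-ε) - 1)]
    · nlinarith
  have := convexHull_min hsub hconv hmem
  simp only [Set.mem_setOf_eq, hk] at this
  nlinarith
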